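/- Under the setting of the previous statement, if μ* ∈ F minimizes μ ↦ (1/N)∑ᵢ L(y_i, f_μ(x_i)) + ‖μ‖_F over F, then f_{μ*} minimizes f ↦ (1/N)∑ᵢ L(y_i, f(x_i)) + ‖f‖_B over B, and moreover ‖f_{μ*}‖_B = ‖μ*‖_F. -/
import Mathlib


/-- If μ* minimizes the training objective over F, then f_{μ*} minimizes the
    abstract training problem over B, and ‖f_{μ*}‖_B = ‖μ*‖_F. -/
theorem stmt_15 {X : Type*} {F E : Type*}
    [NormedAddCommGroup F] [NormedSpace ℝ F] [CompleteSpace F]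
    [NormedAddCommGroup E] [NormedSpace ℝ E] [CompleteSpace E]
    (φ : X → (F →L[ℝ] E)) (L : E → E → ℝ)
    (N : ℕ) (x : Fin N → X) (y : Fin N → E) (μstar : F)
    (hmin : ∀ ν : F,
      (N : ℝ)⁻¹ * ∑ i : Fin N, L (y i) (φ (x i) μstar) + ‖μstar‖ ≤
        (N : ℝ)⁻¹ * ∑ i : Fin N, L (y i) (φ (x i) ν) + ‖ν‖) :
    sInf {c : ℝ | ∃ μ : F, (fun x => φ x μstar) = (fun x => φ x μ) ∧ c = ‖μ‖}
        = ‖μstar‖ ∧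
    ∀ f : X → E, (∃ μ : F, f = fun x => φ x μ) →
      (N : ℝ)⁻¹ * ∑ i : Fin N, L (y i) (φ (x i) μstar) +
          sInf {c : ℝ | ∃ μ : F, (fun x => φ x μstar) = (fun x => φ x μ) ∧ c = ‖μ‖} ≤
        (N : ℝ)⁻¹ * ∑ i : Fin N, L (y i) (f (x i)) +
          sInf {c : ℝ | ∃ μ : F, f = (fun x => φ x μ) ∧ c = ‖μ‖} := by
  have key : ∀ μ : F, (fun x => φ x μstar) = (fun x => φ x μ) → ‖μstar‖ ≤ ‖μ‖ := by
    intro μ hfe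
    have hsum : ∀ i : Fin N, φ (x i) μstar = φ (x i) μ := fun i => congrFun hfe (x i)
    have h := hmin μ
    have heq : (∑ i : Fin N, L (y i) (φ (x i) μstar)) =
        ∑ i : Fin N, L (y i) (φ (x i) μ) :=
      Finset.sum_congr rfl (fun i _ => by rw [hsum i])
    rw [heq] at h
    linarith
  have h1 : sInf {c : ℝ | ∃ μ : F, (fun x => φ x μstar) = (fun x => φ x μ) ∧ c = ‖μ‖}
      = ‖μstar‖ := by
    apply le_antisymm
    · exact csInf_le ⟨‖μstar‖, by rintro c ⟨μ, hfe, rfl⟩; exact key μ hfe⟩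
        ⟨μstar, rfl, rfl⟩
    · exact le_csInf ⟨‖μstar‖, μstar, rfl, rfl⟩
        (by rintro c ⟨μ, hfe, rfl⟩; exact key μ hfe)
  refine ⟨h1, ?_⟩
  rintro f ⟨μ0, rfl⟩
  rw [h1]
  simp only
  set A : ℝ := (N : ℝ)⁻¹ * ∑ i : Fin N, L (y i) (φ (x i) μstar) with hA
  set B : ℝ := (N : ℝ)⁻¹ * ∑ i : Fin N, L (y i) (φ (x i) μ0) with hB
  have hb : A + ‖μstar‖ - B ≤
      sInf {c : ℝ | ∃ μ : F, (fun x => φ x μ0) = (fun x => φ x μ) ∧ c = ‖μ‖} := by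
    refine le_csInf ⟨‖μ0‖, μ0, rfl, rfl⟩ ?_
    rintro c ⟨μ, hfe, rfl⟩
    have hsum : ∀ i : Fin N, φ (x i) μ0 = φ (x i) μ := fun i => congrFun hfe (x i)
    have h := hmin μ
    have heq : (∑ i : Fin N, L (y i) (φ (x i) μ0)) =
        ∑ i : Fin N, L (y i) (φ (x i) μ) :=
      Finset.sum_congr rfl (fun i _ => by rw [hsum i])
    rw [hB, heq]
    linarith
  linarith
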